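/- arXiv:2203.03180 — 3 statements merged into one kernel-verified Lean document; each statement's English description precedes it below -/
import Mathlib

section
/- Suppose ‖δ - μ_gp‖ ≤ ‖β‖·‖σ‖ and the stability constraint 2 eᵀPB μ_qp + (eᵀPe)/ε + 2‖eᵀPB‖·‖β‖·‖σ‖ ≤ 0 holds, where ε > 0, P is symmetric positive definite, AᵀP + PA = -Q with Q positive definite, and e ≠ 0. Then along the dynamics ė = Ae + B(μ_qp - μ_gp + δ), the Lyapunov function V(e) = eᵀPe satisfies V̇(e) + V(e)/ε < 0. -/
open Matrix

/-- Euclidean norm of a finite real vector. -/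
noncomputable def euclNorm {n : ℕ} (v : Fin n → ℝ) : ℝ :=
  ‖(WithLp.equiv 2 (Fin n → ℝ)).symm v‖

lemma euclNorm_nonneg {n : ℕ} (v : Fin n → ℝ) : 0 ≤ euclNorm v := norm_nonneg _

lemma dotProduct_le_euclNorm {n : ℕ} (u v : Fin n → ℝ) :
    u ⬝ᵥ v ≤ euclNorm u * euclNorm v := by
  have h := real_inner_le_norm ((WithLp.equiv 2 (Fin n → ℝ)).symm u)
      ((WithLp.equiv 2 (Fin n → ℝ)).symm v)
  have heq : (inner ℝ ((WithLp.equiv 2 (Fin n → ℝ)).symm u)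
      ((WithLp.equiv 2 (Fin n → ℝ)).symm v) : ℝ) = u ⬝ᵥ v := by
    simp [EuclideanSpace.inner_eq_star_dotProduct, dotProduct, mul_comm]
  rw [heq] at h
  exact h

theorem clf_constraint_implies_decrease
    (n : ℕ) (A P Q : Matrix (Fin (2 * n)) (Fin (2 * n)) ℝ)
    (B : Matrix (Fin (2 * n)) (Fin n) ℝ)
    (hPsymm : P.IsSymm) (hP : P.PosDef) (hQ : Q.PosDef)
    (hLyap : Aᵀ * P + P * A = -Q)
    (μqp μgp δ β σ : Fin n → ℝ) (e : Fin (2 * n) → ℝ) (he : e ≠ 0)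
    (ε : ℝ) (hε : 0 < ε)
    (hdist : euclNorm (δ - μgp) ≤ euclNorm β * euclNorm σ)
    (hconstraint : 2 * (Matrix.vecMul e (P * B) ⬝ᵥ μqp) + (e ⬝ᵥ P.mulVec e) / ε +
      2 * euclNorm (Matrix.vecMul e (P * B)) * euclNorm β * euclNorm σ ≤ 0) :
    2 * (e ⬝ᵥ P.mulVec (A.mulVec e + B.mulVec (μqp - μgp + δ))) +
      (e ⬝ᵥ P.mulVec e) / ε < 0 := by
  -- Positive definiteness of Q
  have hQpos : 0 < e ⬝ᵥ Q.mulVec e := by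
    have := hQ.dotProduct_mulVec_pos he
    simpa using this
  -- 2 eᵀ P A e = - eᵀ Q e
  have hA : 2 * (e ⬝ᵥ P.mulVec (A.mulVec e)) = -(e ⬝ᵥ Q.mulVec e) := by
    have h1 : e ⬝ᵥ (Aᵀ * P).mulVec e = e ⬝ᵥ P.mulVec (A.mulVec e) := by
      rw [← Matrix.mulVec_mulVec, Matrix.dotProduct_mulVec e Aᵀ,
        Matrix.vecMul_transpose]
      rw [Matrix.dotProduct_mulVec, ← Matrix.mulVec_transpose, hPsymm.eq,
        dotProduct_comm]
    have h2 : e ⬝ᵥ (P * A).mulVec e = e ⬝ᵥ P.mulVec (A.mulVec e) := by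
      rw [← Matrix.mulVec_mulVec]
    have h3 : e ⬝ᵥ (Aᵀ * P + P * A).mulVec e = -(e ⬝ᵥ Q.mulVec e) := by
      rw [hLyap]; simp [Matrix.neg_mulVec]
    rw [Matrix.add_mulVec, dotProduct_add, h1, h2] at h3
    linarith
  -- eᵀ P B v = (eᵀ P B) ⬝ v
  have hB : ∀ v : Fin n → ℝ,
      e ⬝ᵥ P.mulVec (B.mulVec v) = Matrix.vecMul e (P * B) ⬝ᵥ v := by
    intro v
    rw [Matrix.mulVec_mulVec, Matrix.dotProduct_mulVec]
  -- decompose the input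
  have hdecomp : e ⬝ᵥ P.mulVec (A.mulVec e + B.mulVec (μqp - μgp + δ)) =
      e ⬝ᵥ P.mulVec (A.mulVec e) + Matrix.vecMul e (P * B) ⬝ᵥ μqp +
      Matrix.vecMul e (P * B) ⬝ᵥ (δ - μgp) := by
    have : μqp - μgp + δ = μqp + (δ - μgp) := by abel
    simp only [this, Matrix.mulVec_add, dotProduct_add, hB]
    ring
  -- Cauchy–Schwarz bound
  have hCS : Matrix.vecMul e (P * B) ⬝ᵥ (δ - μgp) ≤
      euclNorm (Matrix.vecMul e (P * B)) * (euclNorm β * euclNorm σ) := by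
    calc Matrix.vecMul e (P * B) ⬝ᵥ (δ - μgp)
        ≤ euclNorm (Matrix.vecMul e (P * B)) * euclNorm (δ - μgp) :=
          dotProduct_le_euclNorm _ _
      _ ≤ euclNorm (Matrix.vecMul e (P * B)) * (euclNorm β * euclNorm σ) := by
          exact mul_le_mul_of_nonneg_left hdist (euclNorm_nonneg _)
  rw [hdecomp]
  nlinarith [hQpos, hA, hCS, hconstraint]
end

section
/- Let h : ℝ^m → ℝ be continuously differentiable and let x : [0,∞) → ℝ^m be a C¹ solution of a differential equation. Suppose γ : ℝ → ℝ is a locally Lipschitz, strictly increasing function with γ(0) = 0, and that d/dt h(x(t)) ≥ -γ(h(x(t))) for all t. If h(x(0)) ≥ 0, then h(x(t)) ≥ 0 for all t ≥ 0 (forward invariance of the safe set S = {x : h(x) ≥ 0}). -/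
theorem cbf_forward_invariance
    (m : ℕ) (h : (Fin m → ℝ) → ℝ) (hh : ContDiff ℝ 1 h)
    (x : ℝ → Fin m → ℝ) (hx : ContDiff ℝ 1 x)
    (γ : ℝ → ℝ) (hγlip : LocallyLipschitz γ) (hγmono : StrictMono γ) (hγ0 : γ 0 = 0)
    (hineq : ∀ t, 0 ≤ t → deriv (fun s => h (x s)) t ≥ -γ (h (x t)))
    (h0 : 0 ≤ h (x 0)) :
    ∀ t, 0 ≤ t → 0 ≤ h (x t) := by
  intro t ht
  by_contra hneg
  push_neg at hneg
  set u : ℝ → ℝ := fun s => h (x s) with hu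
  have hcd : ContDiff ℝ 1 u := hh.comp hx
  have hcont : Continuous u := hcd.continuous
  -- the set of times in [0,t] where u is nonnegative
  set A : Set ℝ := Set.Icc 0 t ∩ u ⁻¹' Set.Ici 0 with hA
  have hAclosed : IsClosed A := isClosed_Icc.inter (isClosed_Ici.preimage hcont)
  have hAne : A.Nonempty := ⟨0, ⟨le_rfl, ht⟩, h0⟩
  have hAbdd : BddAbove A := ⟨t, fun s hs => hs.1.2⟩
  set T : ℝ := sSup A with hT
  have hTA : T ∈ A := hAclosed.csSup_mem hAne hAbdd
  have hT0 : 0 ≤ T := hTA.1.1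
  have hTt : T ≤ t := hTA.1.2
  have hTu : 0 ≤ u T := hTA.2
  have hTlt : T < t := lt_of_le_of_ne hTt (by intro hEq; rw [hEq] at hTu; exact absurd hTu (not_le.mpr hneg))
  -- on (T, t], u is negative
  have hun : ∀ s ∈ Set.Ioc T t, u s < 0 := by
    intro s hs
    by_contra hns
    push_neg at hns
    exact absurd (le_csSup hAbdd ⟨⟨hT0.trans hs.1.le, hs.2⟩, hns⟩) (not_le.mpr hs.1)
  -- hence deriv u > 0 there, so u is strictly increasing on [T, t]
  have hmono : StrictMonoOn u (Set.Icc T t) := by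
    apply strictMonoOn_of_deriv_pos (convex_Icc T t) hcont.continuousOn
    intro s hs
    rw [interior_Icc] at hs
    have hsneg : u s < 0 := hun s ⟨hs.1, hs.2.le⟩
    have hγneg : γ (u s) < 0 := by
      calc γ (u s) < γ 0 := hγmono hsneg
        _ = 0 := hγ0
    have := hineq s (hT0.trans hs.1.le)
    linarith
  have := hmono ⟨le_rfl, hTlt.le⟩ ⟨hTlt.le, le_rfl⟩ hTlt
  linarith
end

section
/- Suppose ‖δ - μ_gp‖ ≤ ‖β‖·‖σ‖ and the CBF constraint (∂B/∂x)ᵀ B₀ μ_qp - γ(h(x)) + (∂B/∂x)ᵀ(A₀x + B₀(μ_d + μ_pd)) + ‖(∂B/∂x)ᵀ B₀‖·‖β‖·‖σ‖ ≤ 0 holds. Then along the dynamics ẋ = A₀x + B₀(μ_d + μ_pd + μ_qp - μ_gp + δ), the barrier function satisfies Ḃ(x) ≤ γ(h(x)). -/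
open Matrix

lemma dot_le_euclNorm {n : ℕ} (v u : Fin n → ℝ) : v ⬝ᵥ u ≤ euclNorm v * euclNorm u := by
  have := real_inner_le_norm ((WithLp.equiv 2 (Fin n → ℝ)).symm v)
    ((WithLp.equiv 2 (Fin n → ℝ)).symm u)
  simpa [euclNorm, dotProduct, PiLp.inner_apply, RCLike.inner_apply, mul_comm] using this

theorem cbf_constraint_implies_safety
    (n : ℕ) (A₀ : Matrix (Fin (2 * n)) (Fin (2 * n)) ℝ)
    (B₀ : Matrix (Fin (2 * n)) (Fin n) ℝ)
    (x gradB : Fin (2 * n) → ℝ)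
    (μd μpd μqp μgp δ β σ : Fin n → ℝ)
    (h : (Fin (2 * n) → ℝ) → ℝ) (γ : ℝ → ℝ)
    (hdist : euclNorm (δ - μgp) ≤ euclNorm β * euclNorm σ)
    (hconstraint :
      Matrix.vecMul gradB B₀ ⬝ᵥ μqp - γ (h x) +
        gradB ⬝ᵥ (A₀.mulVec x + B₀.mulVec (μd + μpd)) +
        euclNorm (Matrix.vecMul gradB B₀) * euclNorm β * euclNorm σ ≤ 0) :
    gradB ⬝ᵥ (A₀.mulVec x + B₀.mulVec (μd + μpd + μqp - μgp + δ)) ≤ γ (h x) := by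
  have hd : Matrix.vecMul gradB B₀ ⬝ᵥ (δ - μgp) ≤
      euclNorm (Matrix.vecMul gradB B₀) * euclNorm β * euclNorm σ := by
    calc Matrix.vecMul gradB B₀ ⬝ᵥ (δ - μgp)
        ≤ euclNorm (Matrix.vecMul gradB B₀) * euclNorm (δ - μgp) := dot_le_euclNorm _ _
      _ ≤ euclNorm (Matrix.vecMul gradB B₀) * (euclNorm β * euclNorm σ) :=
          mul_le_mul_of_nonneg_left hdist (euclNorm_nonneg _)
      _ = euclNorm (Matrix.vecMul gradB B₀) * euclNorm β * euclNorm σ := (mul_assoc _ _ _).symm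
  have expand : gradB ⬝ᵥ (A₀.mulVec x + B₀.mulVec (μd + μpd + μqp - μgp + δ)) =
      gradB ⬝ᵥ (A₀.mulVec x + B₀.mulVec (μd + μpd)) +
        Matrix.vecMul gradB B₀ ⬝ᵥ μqp + Matrix.vecMul gradB B₀ ⬝ᵥ (δ - μgp) := by
    simp [Matrix.mulVec_add, Matrix.mulVec_sub, dotProduct_add, dotProduct_sub,
      Matrix.dotProduct_mulVec]
    ring
  rw [expand]; linarith
end
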